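/- For all nonnegative integers x and y with x < y, one has S_{6,4}([2x, 2y)) = S_{3,0}([2x, 2y)) − S_{3,0}([4x, 4y)) + S_{3,0}([x, y)). -/

import Mathlib

/-- binary digit sum -/
def sigma2 (n : ℕ) : ℕ := (Nat.digits 2 n).sum

/-- `S m l x = Σ_{0 ≤ n < x, n ≡ l (mod m)} (−1)^{σ(n)}` -/
def S (m l x : ℕ) : ℤ :=
  ∑ n ∈ (Finset.range x).filter (fun n => n % m = l), (-1 : ℤ) ^ sigma2 n

/-- `Sint m l x y = S_{m,l}([x,y)) = S_{m,l}(y) − S_{m,l}(x)` -/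
def Sint (m l x y : ℕ) : ℤ := S m l y - S m l x

lemma sigma2_two_mul (k : ℕ) : sigma2 (2 * k) = sigma2 k := by
  rcases Nat.eq_zero_or_pos k with rfl | hk
  · rfl
  · unfold sigma2
    rw [Nat.digits_def' (by norm_num : 1 < 2) (by omega)]
    rw [show 2 * k % 2 = 0 by omega, show 2 * k / 2 = k by omega]
    simp

lemma sigma2_two_mul_add_one (k : ℕ) : sigma2 (2 * k + 1) = sigma2 k + 1 := by
  unfold sigma2
  rw [Nat.digits_def' (by norm_num : 1 < 2) (by omega)]
  rw [show (2 * k + 1) % 2 = 1 by omega, show (2 * k + 1) / 2 = k by omega]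
  simp [Nat.add_comm]

lemma S_succ (m l n : ℕ) :
    S m l (n + 1) = S m l n + (if n % m = l then (-1 : ℤ) ^ sigma2 n else 0) := by
  unfold S
  rw [Finset.sum_filter, Finset.sum_filter, Finset.sum_range_succ]

lemma claim1 (y : ℕ) : S 6 4 (2 * y) = S 3 2 y := by
  induction y with
  | zero => rfl
  | succ y ih =>
    rw [show 2 * (y + 1) = 2 * y + 1 + 1 by ring, S_succ, S_succ, S_succ, ih,
      sigma2_two_mul, sigma2_two_mul_add_one]
    split_ifs <;> first | ring1 | (exfalso; omega)

lemma claim2 (y : ℕ) : S 3 0 (2 * y) = S 3 0 y - S 3 1 y := by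
  induction y with
  | zero => rfl
  | succ y ih =>
    rw [show 2 * (y + 1) = 2 * y + 1 + 1 by ring, S_succ, S_succ, S_succ, S_succ, ih,
      sigma2_two_mul, sigma2_two_mul_add_one]
    split_ifs <;> first | ring1 | (exfalso; omega)

lemma claim3 (y : ℕ) : S 3 0 (4 * y) = 2 * S 3 0 y - S 3 1 y - S 3 2 y := by
  induction y with
  | zero => rfl
  | succ y ih =>
    have s0 : sigma2 (4 * y) = sigma2 y := by
      rw [show 4 * y = 2 * (2 * y) by ring, sigma2_two_mul, sigma2_two_mul]
    have s1 : sigma2 (4 * y + 1) = sigma2 y + 1 := by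
      rw [show 4 * y + 1 = 2 * (2 * y) + 1 by ring, sigma2_two_mul_add_one, sigma2_two_mul]
    have s2 : sigma2 (4 * y + 2) = sigma2 y + 1 := by
      rw [show 4 * y + 2 = 2 * (2 * y + 1) by ring, sigma2_two_mul, sigma2_two_mul_add_one]
    have s3 : sigma2 (4 * y + 3) = sigma2 y + 1 + 1 := by
      rw [show 4 * y + 3 = 2 * (2 * y + 1) + 1 by ring, sigma2_two_mul_add_one,
        sigma2_two_mul_add_one]
    rw [show 4 * (y + 1) = 4 * y + 1 + 1 + 1 + 1 by ring, S_succ, S_succ, S_succ, S_succ,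
      S_succ, S_succ, S_succ, ih, s0, s1, s2, s3]
    split_ifs <;> first | ring1 | (exfalso; omega)

theorem stmt_9 (x y : ℕ) (hxy : x < y) :
    Sint 6 4 (2 * x) (2 * y) =
      Sint 3 0 (2 * x) (2 * y) - Sint 3 0 (4 * x) (4 * y) + Sint 3 0 x y := by
  unfold Sint
  rw [claim1, claim1, claim2, claim2, claim3, claim3]
  ring
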